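/- Fix a real y with 0 < y and y ≠ 2. Define T(0) = 1 and T(n) = ((2^{n+1} − y^{n+1})/(2^n − y^n))·T(n-1)² for n ≥ 1. Then T(n) = (2^{n+1} − y^{n+1})·(2 − y)^{−2^{n−1}}·∏_{i=2}^{n} (2^i − y^i)^{2^{n−i}} for all n ≥ 1. -/

import Mathlib

open Finset

/-- Fix a real `y` with `0 < y`, `y ≠ 2`.  Let `T 0 = 1` and
`T n = ((2^(n+1) - y^(n+1))/(2^n - y^n))·T(n-1)²` for `n ≥ 1`.  Then
`T n = (2^(n+1) - y^(n+1))·(2-y)^(-2^(n-1))·∏_{i=2}^{n} (2^i - y^i)^(2^(n-i))`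
for all `n ≥ 1`. -/
theorem farey_tutte_x_one_closed_form (y : ℝ) (hy0 : 0 < y) (hy2 : y ≠ 2)
    (T : ℕ → ℝ) (h0 : T 0 = 1)
    (hrec : ∀ n, 1 ≤ n →
      T n = ((2 ^ (n + 1) - y ^ (n + 1)) / (2 ^ n - y ^ n)) * (T (n - 1)) ^ 2) :
    ∀ n, 1 ≤ n →
      T n = (2 ^ (n + 1) - y ^ (n + 1)) * (2 - y) ^ (-(2 ^ (n - 1) : ℤ)) *
        ∏ i ∈ Icc 2 n, ((2 : ℝ) ^ i - y ^ i) ^ (2 ^ (n - i)) := by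
  have hne : ∀ m : ℕ, 1 ≤ m → (2:ℝ)^m - y^m ≠ 0 := by
    intro m hm
    rcases lt_trichotomy y 2 with h | h | h
    · have : y^m < 2^m := pow_lt_pow_left₀ h hy0.le (by omega)
      linarith
    · exact absurd h hy2
    · have : (2:ℝ)^m < y^m := pow_lt_pow_left₀ h (by norm_num) (by omega)
      linarith
  have hy2' : (2:ℝ) - y ≠ 0 := by
    have := hne 1 le_rfl; simpa using this
  intro n hn
  induction n, hn using Nat.le_induction with
  | base =>
      have h1 := hrec 1 le_rfl
      simp only [h0, pow_one, one_pow, mul_one] at h1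
      rw [h1]
      simp [zpow_neg, div_eq_mul_inv]
  | succ n hn ih =>
      have h1 := hrec (n+1) (by omega)
      simp only [Nat.add_sub_cancel] at h1
      rw [h1, ih]
      rw [Finset.prod_Icc_succ_top (by omega : 2 ≤ n+1)]
      have hprod : ∏ i ∈ Icc 2 n, ((2:ℝ)^i - y^i) ^ (2^(n+1-i)) =
          (∏ i ∈ Icc 2 n, ((2:ℝ)^i - y^i) ^ (2^(n-i)))^2 := by
        rw [← Finset.prod_pow]
        apply Finset.prod_congr rfl
        intro i hi
        simp only [mem_Icc] at hi
        rw [← pow_mul]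
        congr 1
        have h2 : n + 1 - i = (n - i) + 1 := by omega
        rw [h2, pow_succ]
      rw [hprod]
      have hzz : (((2:ℝ) - y) ^ (-(2^(n-1):ℤ)))^2 = ((2:ℝ) - y) ^ (-(2^n:ℤ)) := by
        rw [← zpow_natCast (((2:ℝ) - y) ^ (-(2^(n-1):ℤ))) 2, ← zpow_mul]
        congr 1
        have : (2:ℤ)^(n-1) * 2 = 2^n := by
          rw [← pow_succ]
          congr 1
          omega
        push_cast
        linarith [this]
      simp only [Nat.sub_self, pow_zero, pow_one, Nat.add_sub_cancel]
      rw [mul_pow, mul_pow, hzz]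
      have hA := hne (n+1) (by omega)
      field_simp
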